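/- Every extreme point of the polyhedron P^Q = {y ∈ ℝ^J : for every S ⊆ J, ∑_{i∈S} p_i y_i ≥ g_p(S)} satisfies positivity (y_j ≥ p_j for all j ∈ J) and non-overlapping (for all i ≠ j in J, y_j ≥ y_i + p_j or y_i ≥ y_j + p_i); that is, it encodes a feasible single-machine schedule by its completion times. -/

import Mathlib

/-- `g_p(S) = ½(∑_{j∈S} p_j)² + ½ ∑_{j∈S} p_j²`. -/
noncomputable def gp {J : Type*} (p : J → ℝ) (S : Finset J) : ℝ :=
  (∑ j ∈ S, p j) ^ 2 / 2 + (∑ j ∈ S, (p j) ^ 2) / 2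

/-- The polyhedron `P^Q = {y ∈ ℝ^J : ∀ S ⊆ J, ∑_{i∈S} p_i y_i ≥ g_p(S)}`. -/
def PQ {J : Type*} [Fintype J] (p : J → ℝ) : Set (J → ℝ) :=
  {y | ∀ S : Finset J, ∑ i ∈ S, p i * y i ≥ gp p S}

lemma gp_insert {J : Type*} [DecidableEq J] (p : J → ℝ) (S : Finset J) {j : J} (hj : j ∉ S) :
    gp p (insert j S) = gp p S + p j * (∑ k ∈ S, p k) + (p j) ^ 2 := by
  simp only [gp, Finset.sum_insert hj]
  ring

/-- Every extreme point of `P^Q` (a point of `P^Q` which is not the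
midpoint of two distinct points of `P^Q`) satisfies positivity and non-overlapping,
i.e. it encodes a feasible single-machine schedule by its completion times. -/
theorem stmt_4 {J : Type*} [Fintype J] (p : J → ℝ) (hp : ∀ j, 0 < p j)
    (y : J → ℝ) (hy : y ∈ PQ p)
    (hext : ∀ y₁ ∈ PQ p, ∀ y₂ ∈ PQ p, (∀ k, y k = (y₁ k + y₂ k) / 2) → y₁ = y₂) :
    (∀ j, p j ≤ y j) ∧
      (∀ i j : J, i ≠ j → y j ≥ y i + p j ∨ y i ≥ y j + p i) := by
  classical
  have hpos : ∀ j, p j ≤ y j := by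
    intro j
    have h := hy {j}
    simp only [gp, Finset.sum_singleton] at h
    nlinarith [hp j, h]
  refine ⟨hpos, ?_⟩
  intro i j hij
  by_contra hcon
  push_neg at hcon
  obtain ⟨h1, h2⟩ := hcon
  -- upper bound: members of a tight set
  have hub : ∀ S : Finset J, ∑ k ∈ S, p k * y k = gp p S →
      ∀ a ∈ S, y a ≤ ∑ k ∈ S, p k := by
    intro S hS a ha
    have hcon' := hy (S.erase a)
    have hsum' : p a * y a + ∑ k ∈ S.erase a, p k * y k = ∑ k ∈ S, p k * y k :=
      Finset.add_sum_erase S (fun k => p k * y k) ha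
    have hgp : gp p S = gp p (S.erase a) + p a * (∑ k ∈ S.erase a, p k) + (p a) ^ 2 := by
      conv_lhs => rw [← Finset.insert_erase ha]
      exact gp_insert p _ (Finset.notMem_erase a S)
    have hsumS : p a + ∑ k ∈ S.erase a, p k = ∑ k ∈ S, p k :=
      Finset.add_sum_erase S p ha
    have h3 : p a * y a ≤ p a * (∑ k ∈ S, p k) := by
      rw [← hsumS]; nlinarith [hcon', hS, hsum', hgp]
    exact le_of_mul_le_mul_left h3 (hp a)
  -- lower bound: non-members of a tight set
  have hlb : ∀ S : Finset J, ∑ k ∈ S, p k * y k = gp p S →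
      ∀ a ∉ S, (∑ k ∈ S, p k) + p a ≤ y a := by
    intro S hS a ha
    have hcon' := hy (insert a S)
    rw [Finset.sum_insert ha, gp_insert p S ha] at hcon'
    have h3 : p a * ((∑ k ∈ S, p k) + p a) ≤ p a * y a := by nlinarith [hcon', hS]
    exact le_of_mul_le_mul_left h3 (hp a)
  -- tight sets do not separate i and j
  have key : ∀ S : Finset J, ∑ k ∈ S, p k * y k = gp p S → ((i ∈ S) ↔ (j ∈ S)) := by
    intro S hS
    constructor
    · intro hi; by_contra hj'
      have hb1 := hlb S hS j hj'
      have hb2 := hub S hS i hi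
      linarith
    · intro hjS; by_contra hi'
      have hb1 := hlb S hS i hi'
      have hb2 := hub S hS j hjS
      linarith
  -- the perturbation direction
  set d : J → ℝ := fun k => if k = i then 1 / p i else if k = j then -(1 / p j) else 0 with hdd
  have hd : ∀ S : Finset J, ∑ k ∈ S, p k * d k
      = (if i ∈ S then (1:ℝ) else 0) + (if j ∈ S then (-1:ℝ) else 0) := by
    intro S
    have hpt : ∀ k, p k * d k
        = (if k = i then (1:ℝ) else 0) + (if k = j then (-1:ℝ) else 0) := by
      intro k
      by_cases hk : k = i
      · subst hk
        have : k ≠ j := hij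
        simp [hdd, this, (hp k).ne']
      · by_cases hk' : k = j
        · subst hk'
          simp [hdd, hk, (hp k).ne']
        · simp [hdd, hk, hk']
    calc ∑ k ∈ S, p k * d k
        = ∑ k ∈ S, ((if k = i then (1:ℝ) else 0) + (if k = j then (-1:ℝ) else 0)) :=
          Finset.sum_congr rfl (fun k _ => hpt k)
      _ = (if i ∈ S then (1:ℝ) else 0) + (if j ∈ S then (-1:ℝ) else 0) := by
          rw [Finset.sum_add_distrib, Finset.sum_ite_eq' S i (fun _ => (1:ℝ)),
            Finset.sum_ite_eq' S j (fun _ => (-1:ℝ))]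
  -- separating sets and minimal slack
  set T : Finset (Finset J) :=
    Finset.univ.filter (fun S => ¬ ((i ∈ S) ↔ (j ∈ S))) with hTT
  have hTne : T.Nonempty := by
    refine ⟨{i}, ?_⟩
    simp [hTT, Finset.mem_filter, (Ne.symm hij)]
  set ε : ℝ := T.inf' hTne (fun S => ∑ k ∈ S, p k * y k - gp p S) with hεε
  have hε_le : ∀ S ∈ T, ε ≤ ∑ k ∈ S, p k * y k - gp p S :=
    fun S hS => Finset.inf'_le _ hS
  have hε_pos : 0 < ε := by
    rw [hεε, Finset.lt_inf'_iff]
    intro S hST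
    rcases eq_or_lt_of_le (hy S : gp p S ≤ _) with h | h
    · exfalso
      have := key S h.symm
      rw [hTT, Finset.mem_filter] at hST
      exact hST.2 this
    · linarith
  -- both perturbed points are feasible
  have hmem : ∀ s : ℝ, (s = 1 ∨ s = -1) → (fun k => y k + s * ε * d k) ∈ PQ p := by
    intro s hs
    simp only [PQ, Set.mem_setOf_eq]
    intro S
    have hsum : ∑ k ∈ S, p k * (y k + s * ε * d k)
        = ∑ k ∈ S, p k * y k + s * ε * (∑ k ∈ S, p k * d k) := by
      rw [Finset.mul_sum, ← Finset.sum_add_distrib]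
      exact Finset.sum_congr rfl (fun k _ => by ring)
    rw [ge_iff_le, hsum, hd S]
    have hge := hy S
    by_cases hiS : i ∈ S <;> by_cases hjS : j ∈ S
    · rw [if_pos hiS, if_pos hjS]
      rcases hs with h | h <;> subst h <;> linarith
    · have hST : S ∈ T := by
        rw [hTT, Finset.mem_filter]
        exact ⟨Finset.mem_univ S, by simp [hiS, hjS]⟩
      have hsl := hε_le S hST
      rw [if_pos hiS, if_neg hjS]
      rcases hs with h | h <;> subst h <;> linarith
    · have hST : S ∈ T := by
        rw [hTT, Finset.mem_filter]
        exact ⟨Finset.mem_univ S, by simp [hiS, hjS]⟩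
      have hsl := hε_le S hST
      rw [if_neg hiS, if_pos hjS]
      rcases hs with h | h <;> subst h <;> linarith
    · rw [if_neg hiS, if_neg hjS]
      rcases hs with h | h <;> subst h <;> linarith
  have h12 : (fun k => y k + 1 * ε * d k) = (fun k => y k + (-1) * ε * d k) :=
    hext _ (hmem 1 (Or.inl rfl)) _ (hmem (-1) (Or.inr rfl)) (fun k => by ring)
  have hpt := congrFun h12 i
  have hdi : d i = 1 / p i := by simp [hdd]
  have hdi' : 0 < d i := by rw [hdi]; exact div_pos one_pos (hp i)
  nlinarith [hpt, hε_pos, hdi']
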